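/- Shannon entropy uncertainty for a full set of MUBs: for d = 2^n and a full set of d+1 mutually unbiased bases B_1,...,B_{d+1}, every pure state |Ψ⟩ satisfies (1/(d+1)) Σ_b H(B_b||Ψ⟩) ≥ log(d+1) − 1. -/

import Mathlib

noncomputable section

/-- Shannon entropy (in bits). -/
def shannonEntropy2 {X : Type*} [Fintype X] (p : X → ℝ) : ℝ :=
  -∑ x, p x * Real.logb 2 (p x)


section MUBAux
open Finset

lemma conj_mul_self_eq (z : ℂ) : (starRingEnd ℂ) z * z = ((‖z‖ ^ 2 : ℝ) : ℂ) := by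
  rw [mul_comm, Complex.mul_conj, Complex.normSq_eq_norm_sq]

lemma mul_conj_self_eq (z : ℂ) : z * (starRingEnd ℂ) z = ((‖z‖ ^ 2 : ℝ) : ℂ) := by
  rw [Complex.mul_conj, Complex.normSq_eq_norm_sq]

lemma parseval_aux {d : ℕ} (hd : d ≠ 0) (w : Fin d → EuclideanSpace ℂ (Fin d))
    (hw : Orthonormal ℂ w) (Ψ : EuclideanSpace ℂ (Fin d)) (hΨ : ‖Ψ‖ = 1) :
    ∑ x, ‖(inner ℂ (w x) Ψ : ℂ)‖ ^ 2 = 1 := by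
  haveI : Nonempty (Fin d) := ⟨⟨0, Nat.pos_of_ne_zero hd⟩⟩
  have hcard : Fintype.card (Fin d) = Module.finrank ℂ (EuclideanSpace ℂ (Fin d)) := by
    simp [finrank_euclideanSpace_fin]
  set B := basisOfLinearIndependentOfCardEqFinrank hw.linearIndependent hcard with hBdef
  have hB : ⇑B = w := coe_basisOfLinearIndependentOfCardEqFinrank _ _
  have hwB : Orthonormal ℂ ⇑B := hB ▸ hw
  set OB := B.toOrthonormalBasis hwB with hOBdef
  have hOB : ⇑OB = w := by rw [Module.Basis.coe_toOrthonormalBasis, hB]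
  have hsum := OB.sum_inner_mul_inner Ψ Ψ
  simp only [hOB] at hsum
  have h1 : ∀ x, (inner ℂ Ψ (w x) : ℂ) * (inner ℂ (w x) Ψ : ℂ)
      = ((‖(inner ℂ (w x) Ψ : ℂ)‖ ^ 2 : ℝ) : ℂ) := by
    intro x
    have hc : (inner ℂ Ψ (w x) : ℂ) = (starRingEnd ℂ) (inner ℂ (w x) Ψ : ℂ) := by
      rw [inner_conj_symm]
    rw [hc, conj_mul_self_eq]
  rw [Finset.sum_congr rfl fun x _ => h1 x] at hsum
  have h2 : (inner ℂ Ψ Ψ : ℂ) = 1 := by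
    rw [inner_self_eq_norm_sq_to_K, hΨ]; norm_num
  rw [h2, ← Complex.ofReal_sum] at hsum
  exact_mod_cast hsum

variable {d : ℕ}

def gmat (d : ℕ) (u : EuclideanSpace ℂ (Fin d)) : EuclideanSpace ℂ (Fin d × Fin d) :=
  WithLp.toLp 2 (fun ij : Fin d × Fin d => u ij.1 * (starRingEnd ℂ) (u ij.2) - (if ij.1 = ij.2 then ((d : ℂ))⁻¹ else 0))

lemma inner_gmat (hd : d ≠ 0) (u w : EuclideanSpace ℂ (Fin d)) :
    (inner ℂ (gmat d u) (gmat d w) : ℂ) =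
      (inner ℂ u w : ℂ) * (starRingEnd ℂ) (inner ℂ u w : ℂ)
        - (‖u‖ : ℂ) ^ 2 / d - (‖w‖ : ℂ) ^ 2 / d + 1 / d := by
  have key : ∀ i j : Fin d,
      (inner ℂ (gmat d u (i, j)) (gmat d w (i, j)) : ℂ) =
        ((starRingEnd ℂ) (u i) * w i) * (u j * (starRingEnd ℂ) (w j))
          - (if i = j then ((d : ℂ))⁻¹ * ((starRingEnd ℂ) (u i) * u j) else 0)
          - (if i = j then ((d : ℂ))⁻¹ * (w i * (starRingEnd ℂ) (w j)) else 0)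
          + (if i = j then ((d : ℂ))⁻¹ * ((d : ℂ))⁻¹ else 0) := by
    intro i j
    by_cases h : i = j <;>
      simp [gmat, RCLike.inner_apply, h, map_sub, map_mul, map_inv₀] <;> ring
  rw [PiLp.inner_apply, Fintype.sum_prod_type]
  simp only [key, Finset.sum_sub_distrib, Finset.sum_add_distrib, Finset.sum_ite_eq,
    Finset.mem_univ, if_true, ← Finset.sum_mul, ← Finset.mul_sum]
  have h1 : (inner ℂ u w : ℂ) = ∑ i, (starRingEnd ℂ) (u i) * w i := by
    rw [PiLp.inner_apply]; exact Finset.sum_congr rfl fun i _ => by rw [RCLike.inner_apply]; ring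
  have h2 : (∑ i, u i * (starRingEnd ℂ) (w i)) = (starRingEnd ℂ) (inner ℂ u w : ℂ) := by
    rw [h1, map_sum]
    exact Finset.sum_congr rfl fun i _ => by rw [map_mul, Complex.conj_conj, mul_comm]
  have hsq : ∀ z : ℂ, (starRingEnd ℂ) z * z = ((‖z‖ : ℂ)) ^ 2 := by
    intro z
    rw [mul_comm, Complex.mul_conj, Complex.normSq_eq_norm_sq]
    push_cast; ring
  have h3 : (∑ i, (starRingEnd ℂ) (u i) * u i) = (‖u‖ : ℂ) ^ 2 := by
    have := PiLp.norm_sq_eq_of_L2 (fun _ : Fin d => ℂ) u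
    simp only [hsq]
    rw [show ((‖u‖:ℂ))^2 = ((‖u‖^2 : ℝ) : ℂ) by push_cast; ring, this]
    push_cast; ring
  have h4 : (∑ i, w i * (starRingEnd ℂ) (w i)) = (‖w‖ : ℂ) ^ 2 := by
    have := PiLp.norm_sq_eq_of_L2 (fun _ : Fin d => ℂ) w
    have hpt : ∀ i, w i * (starRingEnd ℂ) (w i) = ((‖w i‖ : ℂ)) ^ 2 := fun i => by
      rw [mul_comm, hsq]
    simp only [hpt]
    rw [show ((‖w‖:ℂ))^2 = ((‖w‖^2 : ℝ) : ℂ) by push_cast; ring, this]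
    push_cast; ring
  rw [h2, h3, h4, ← h1]
  simp only [Finset.sum_const, Finset.card_univ, Fintype.card_fin, nsmul_eq_mul]
  have hdc : (d : ℂ) ≠ 0 := Nat.cast_ne_zero.mpr hd
  field_simp


lemma collision_bound {d : ℕ} (hd : d ≠ 0)
    (v : Fin (d + 1) → Fin d → EuclideanSpace ℂ (Fin d))
    (horth : ∀ b, Orthonormal ℂ (v b))
    (hmub : ∀ b b', b ≠ b' → ∀ x x',
      ‖(inner ℂ (v b x) (v b' x') : ℂ)‖ ^ 2 = 1 / (d : ℝ))
    (Ψ : EuclideanSpace ℂ (Fin d)) (hΨ : ‖Ψ‖ = 1) :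
    ∑ b, ∑ x, (‖(inner ℂ (v b x) Ψ : ℂ)‖ ^ 2) ^ 2 ≤ 2 := by
  classical
  have hdR : (0 : ℝ) < (d : ℝ) := by exact_mod_cast Nat.pos_of_ne_zero hd
  set p : Fin (d + 1) → Fin d → ℝ := fun b x => ‖(inner ℂ (v b x) Ψ : ℂ)‖ ^ 2 with hp
  set t : Fin (d + 1) → Fin d → ℝ := fun b x => p b x - (d : ℝ)⁻¹ with ht
  have hunit : ∀ b x, ‖v b x‖ = 1 := fun b x => (horth b).1 x
  have hpsum : ∀ b, ∑ x, p b x = 1 := fun b => parseval_aux hd (v b) (horth b) Ψ hΨ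
  have htsum : ∀ b, ∑ x, t b x = 0 := by
    intro b
    simp only [ht, Finset.sum_sub_distrib, hpsum b, Finset.sum_const, Finset.card_univ,
      Fintype.card_fin, nsmul_eq_mul]
    field_simp
    norm_num
  have F2 : ∀ b x, (inner ℂ (gmat d (v b x)) (gmat d Ψ) : ℂ) = ((t b x : ℝ) : ℂ) := by
    intro b x
    rw [inner_gmat hd, mul_conj_self_eq, hunit, hΨ]
    simp only [ht, hp]
    push_cast
    ring
  have F3 : ∀ b x b' x', (inner ℂ (gmat d (v b x)) (gmat d (v b' x')) : ℂ) =
      if b = b' then ((if x = x' then 1 else 0) - ((d : ℂ))⁻¹) else 0 := by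
    intro b x b' x'
    rw [inner_gmat hd, mul_conj_self_eq, hunit, hunit]
    by_cases hbb : b = b'
    · subst hbb
      rw [if_pos rfl]
      have hio := orthonormal_iff_ite.mp (horth b) x x'
      by_cases hxx : x = x'
      · subst hxx
        rw [hio]
        simp only [if_pos rfl]
        norm_num
      · rw [hio]
        simp only [if_neg hxx]
        norm_num
    · rw [if_neg hbb, hmub b b' hbb x x']
      push_cast
      field_simp
      ring
  have F4 : (inner ℂ (gmat d Ψ) (gmat d Ψ) : ℂ) = ((1 - (d : ℝ)⁻¹ : ℝ) : ℂ) := by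
    rw [inner_gmat hd, hΨ]
    have h2 : (inner ℂ Ψ Ψ : ℂ) = 1 := by
      rw [inner_self_eq_norm_sq_to_K, hΨ]; norm_num
    rw [h2]
    simp only [map_one, one_mul]
    push_cast
    ring
  set S : EuclideanSpace ℂ (Fin d × Fin d) :=
    ∑ b, ∑ x, ((t b x : ℝ) : ℂ) • gmat d (v b x) with hS
  set T : ℝ := ∑ b, ∑ x, (t b x) ^ 2 with hT
  have hT0 : (0 : ℝ) ≤ T :=
    Finset.sum_nonneg fun b _ => Finset.sum_nonneg fun x _ => sq_nonneg _
  have F2' : ∀ b x, (inner ℂ (gmat d Ψ) (gmat d (v b x)) : ℂ) = ((t b x : ℝ) : ℂ) := by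
    intro b x
    rw [← inner_conj_symm, F2, Complex.conj_ofReal]
  have hGS : (inner ℂ (gmat d Ψ) S : ℂ) = ((T : ℝ) : ℂ) := by
    rw [hS]
    simp only [inner_sum, inner_smul_right, F2']
    rw [hT]
    push_cast
    simp [sq]
  have hgvS : ∀ b x, (inner ℂ (gmat d (v b x)) S : ℂ) = ((t b x : ℝ) : ℂ) := by
    intro b x
    rw [hS]
    simp only [inner_sum, inner_smul_right, F3]
    rw [Finset.sum_eq_single b]
    · have hterm : ∀ x', ((t b x' : ℝ) : ℂ) * (if b = b then ((if x = x' then 1 else 0) - ((d : ℂ))⁻¹) else 0)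
          = ((t b x' : ℝ) : ℂ) * (if x = x' then 1 else 0) - ((d : ℂ))⁻¹ * ((t b x' : ℝ) : ℂ) := by
        intro x'
        rw [if_pos rfl]
        ring
      rw [Finset.sum_congr rfl fun x' _ => hterm x']
      rw [Finset.sum_sub_distrib, ← Finset.mul_sum]
      have hz : (∑ x', ((t b x' : ℝ) : ℂ)) = 0 := by
        rw [← Complex.ofReal_sum, htsum b, Complex.ofReal_zero]
      rw [hz, mul_zero, sub_zero]
      simp [Finset.sum_ite_eq, mul_ite]
    · intro b' _ hb'
      apply Finset.sum_eq_zero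
      intro x' _
      rw [if_neg (Ne.symm hb'), mul_zero]
    · intro h
      exact absurd (Finset.mem_univ b) h
  have hSS : (inner ℂ S S : ℂ) = ((T : ℝ) : ℂ) := by
    nth_rewrite 1 [hS]
    rw [sum_inner]
    simp only [sum_inner, inner_smul_left, hgvS, Complex.conj_ofReal]
    rw [hT]
    push_cast
    simp [sq]
  have hnormΨ : ‖gmat d Ψ‖ ^ 2 = 1 - (d : ℝ)⁻¹ := by
    have h := F4
    rw [inner_self_eq_norm_sq_to_K, ← RCLike.ofReal_pow] at h
    exact RCLike.ofReal_inj.mp h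
  have hnormS : ‖S‖ ^ 2 = T := by
    have h := hSS
    rw [inner_self_eq_norm_sq_to_K, ← RCLike.ofReal_pow] at h
    exact RCLike.ofReal_inj.mp h
  have hcs : T ≤ ‖gmat d Ψ‖ * ‖S‖ := by
    have h1 : T = Complex.re (inner ℂ (gmat d Ψ) S : ℂ) := by rw [hGS, Complex.ofReal_re]
    calc T = Complex.re (inner ℂ (gmat d Ψ) S : ℂ) := h1
      _ ≤ |Complex.re (inner ℂ (gmat d Ψ) S : ℂ)| := le_abs_self _
      _ ≤ ‖(inner ℂ (gmat d Ψ) S : ℂ)‖ := Complex.abs_re_le_norm _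
      _ = ‖(inner ℂ (gmat d Ψ) S : ℂ)‖ := rfl
      _ ≤ ‖gmat d Ψ‖ * ‖S‖ := norm_inner_le_norm _ _
  have hTle : T ≤ 1 - (d : ℝ)⁻¹ := by
    have h2 : T * T ≤ (1 - (d : ℝ)⁻¹) * T := by
      have h3 : T * T ≤ (‖gmat d Ψ‖ * ‖S‖) * (‖gmat d Ψ‖ * ‖S‖) :=
        mul_le_mul hcs hcs hT0 (by positivity)
      calc T * T ≤ (‖gmat d Ψ‖ * ‖S‖) * (‖gmat d Ψ‖ * ‖S‖) := h3
        _ = ‖gmat d Ψ‖ ^ 2 * ‖S‖ ^ 2 := by ring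
        _ = (1 - (d : ℝ)⁻¹) * T := by rw [hnormΨ, hnormS]
    rcases eq_or_lt_of_le hT0 with h | h
    · rw [← h]
      have hd1 : (1 : ℝ) ≤ (d : ℝ) := by exact_mod_cast Nat.one_le_iff_ne_zero.mpr hd
      have : (d : ℝ)⁻¹ ≤ 1 := by
        rw [inv_le_one_iff₀]
        right; exact hd1
      linarith
    · exact le_of_mul_le_mul_right h2 h
  have hexp : ∀ b, ∑ x, (p b x) ^ 2 = (∑ x, (t b x) ^ 2) + (d : ℝ)⁻¹ := by
    intro b
    have hx : ∀ x, (p b x) ^ 2 = (t b x) ^ 2 + 2 * (d : ℝ)⁻¹ * t b x + ((d : ℝ)⁻¹) ^ 2 := by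
      intro x
      simp only [ht]
      ring
    rw [Finset.sum_congr rfl fun x _ => hx x]
    rw [Finset.sum_add_distrib, Finset.sum_add_distrib, ← Finset.mul_sum, htsum b]
    simp only [mul_zero, add_zero, Finset.sum_const, Finset.card_univ, Fintype.card_fin,
      nsmul_eq_mul]
    have : (d : ℝ) * ((d : ℝ)⁻¹) ^ 2 = (d : ℝ)⁻¹ := by
      field_simp
    rw [this]
  calc ∑ b, ∑ x, (p b x) ^ 2 = ∑ b : Fin (d + 1), ((∑ x, (t b x) ^ 2) + (d : ℝ)⁻¹) :=
        Finset.sum_congr rfl fun b _ => hexp b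
    _ = T + (d + 1 : ℝ) * (d : ℝ)⁻¹ := by
        rw [Finset.sum_add_distrib, ← hT, Finset.sum_const, Finset.card_univ, Fintype.card_fin,
          nsmul_eq_mul]
        push_cast
        ring
    _ ≤ (1 - (d : ℝ)⁻¹) + (d + 1 : ℝ) * (d : ℝ)⁻¹ := by linarith
    _ = 2 := by
        field_simp
        ring


lemma neg_logb_sum_sq_le_shannon {X : Type*} [Fintype X] (p : X → ℝ)
    (h0 : ∀ x, 0 ≤ p x) (h1 : ∑ x, p x = 1) :
    - Real.logb 2 (∑ x, (p x) ^ 2) ≤ shannonEntropy2 p := by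
  classical
  have hlog2 : (0 : ℝ) < Real.log 2 := Real.log_pos one_lt_two
  have key : ∑ x, p x * Real.log (p x) ≤ Real.log (∑ x, (p x) ^ 2) := by
    set s : Finset X := Finset.univ.filter (fun x => p x ≠ 0) with hs
    have hsub : s ⊆ Finset.univ := Finset.filter_subset _ _
    have hsum_s : ∑ x ∈ s, p x = 1 := by
      rw [hs, Finset.sum_filter_ne_zero]; exact h1
    have hmem : ∀ x ∈ s, p x ∈ Set.Ioi (0 : ℝ) := by
      intro x hx
      rcases (h0 x).lt_or_eq with h | h
      · exact h
      · exact absurd h.symm (Finset.mem_filter.mp hx).2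
    have jensen := (strictConcaveOn_log_Ioi.concaveOn).le_map_sum
      (fun x _ => h0 x) hsum_s hmem
    have e1 : ∑ x, p x * Real.log (p x) = ∑ x ∈ s, p x • Real.log (p x) := by
      rw [eq_comm]
      apply Finset.sum_subset hsub
      intro x _ hx
      have hz : p x = 0 := by
        by_contra hne
        exact hx (Finset.mem_filter.mpr ⟨Finset.mem_univ x, hne⟩)
      simp [hz]
    have e2 : ∑ x ∈ s, p x • p x = ∑ x, (p x) ^ 2 := by
      rw [Finset.sum_congr rfl (fun x _ => (by rw [smul_eq_mul, ← sq] :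
        p x • p x = (p x) ^ 2))]
      apply Finset.sum_subset hsub
      intro x _ hx
      have hz : p x = 0 := by
        by_contra hne
        exact hx (Finset.mem_filter.mpr ⟨Finset.mem_univ x, hne⟩)
      simp [hz]
    rw [e1, ← e2]
    exact jensen
  rw [shannonEntropy2]
  have e3 : ∑ x, p x * Real.logb 2 (p x) = (∑ x, p x * Real.log (p x)) / Real.log 2 := by
    rw [Finset.sum_div]
    apply Finset.sum_congr rfl
    intro x _
    rw [Real.logb, mul_div_assoc]
  rw [e3, Real.logb, neg_le_neg_iff]
  gcongr

end MUBAux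

open Finset

/-- Shannon-entropy uncertainty relation for a full set of MUBs: for `d = 2ⁿ` and `d + 1`
mutually unbiased bases of `ℂ^d`, every pure state `Ψ` satisfies
`(1/(d+1)) Σ_b H(B_b|Ψ) ≥ log(d+1) - 1` (logarithms base 2). -/
theorem shannon_entropy_full_mub_uncertainty {n : ℕ}
    (v : Fin (2 ^ n + 1) → Fin (2 ^ n) → EuclideanSpace ℂ (Fin (2 ^ n)))
    (horth : ∀ b, Orthonormal ℂ (v b))
    (hmub : ∀ b b', b ≠ b' → ∀ x x',
      ‖(inner ℂ (v b x) (v b' x') : ℂ)‖ ^ 2 = 1 / (2 ^ n : ℝ))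
    (Ψ : EuclideanSpace ℂ (Fin (2 ^ n))) (hΨ : ‖Ψ‖ = 1) :
    Real.logb 2 (2 ^ n + 1) - 1 ≤
      (1 / ((2 : ℝ) ^ n + 1)) *
        ∑ b, shannonEntropy2 (fun x => ‖(inner ℂ (v b x) Ψ : ℂ)‖ ^ 2) := by
  classical
  have hd : (2 ^ n : ℕ) ≠ 0 := pow_ne_zero n two_ne_zero
  have hcast : ((2 ^ n : ℕ) : ℝ) = (2 : ℝ) ^ n := by push_cast; ring
  set N : ℝ := (2 : ℝ) ^ n + 1 with hN
  have hNpos : 0 < N := by positivity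
  have hmub' : ∀ b b', b ≠ b' → ∀ x x',
      ‖(inner ℂ (v b x) (v b' x') : ℂ)‖ ^ 2 = 1 / ((2 ^ n : ℕ) : ℝ) := by
    intro b b' hbb x x'
    rw [hcast]
    exact hmub b b' hbb x x'
  have hcol : ∑ b, ∑ x, (‖(inner ℂ (v b x) Ψ : ℂ)‖ ^ 2) ^ 2 ≤ 2 :=
    collision_bound hd v horth hmub' Ψ hΨ
  set c : Fin (2 ^ n + 1) → ℝ := fun b => ∑ x, (‖(inner ℂ (v b x) Ψ : ℂ)‖ ^ 2) ^ 2 with hc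
  have hpsum : ∀ b, ∑ x, ‖(inner ℂ (v b x) Ψ : ℂ)‖ ^ 2 = 1 :=
    fun b => parseval_aux hd (v b) (horth b) Ψ hΨ
  have hcpos : ∀ b, 0 < c b := by
    intro b
    rcases (Finset.sum_nonneg fun x _ => sq_nonneg ((‖(inner ℂ (v b x) Ψ : ℂ)‖ ^ 2))).lt_or_eq
      with h | h
    · exact h
    · exfalso
      have hall := (Finset.sum_eq_zero_iff_of_nonneg fun x _ =>
        sq_nonneg ((‖(inner ℂ (v b x) Ψ : ℂ)‖ ^ 2))).mp h.symm
      have : ∑ x, ‖(inner ℂ (v b x) Ψ : ℂ)‖ ^ 2 = 0 := by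
        apply Finset.sum_eq_zero
        intro x hx
        exact pow_eq_zero_iff two_ne_zero |>.mp (hall x hx)
      rw [hpsum b] at this
      norm_num at this
  have hH : ∀ b, - Real.logb 2 (c b) ≤
      shannonEntropy2 (fun x => ‖(inner ℂ (v b x) Ψ : ℂ)‖ ^ 2) := by
    intro b
    exact neg_logb_sum_sq_le_shannon _ (fun x => by positivity) (hpsum b)
  have hsum1 : ∑ b, (- Real.logb 2 (c b)) ≤
      ∑ b, shannonEntropy2 (fun x => ‖(inner ℂ (v b x) Ψ : ℂ)‖ ^ 2) :=
    Finset.sum_le_sum fun b _ => hH b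
  have hstep : Real.logb 2 N - 1 ≤ (1 / N) * ∑ b, (- Real.logb 2 (c b)) := by
    have hwsum : ∑ _b : Fin (2 ^ n + 1), N⁻¹ = 1 := by
      rw [Finset.sum_const, Finset.card_univ, Fintype.card_fin, nsmul_eq_mul]
      rw [hN]
      push_cast
      field_simp
    have jensen := (strictConcaveOn_log_Ioi.concaveOn).le_map_sum
      (t := Finset.univ) (w := fun _ : Fin (2 ^ n + 1) => N⁻¹) (p := c)
      (fun b _ => by positivity) hwsum (fun b _ => hcpos b)
    -- jensen : ∑ b, N⁻¹ • Real.log (c b) ≤ Real.log (∑ b, N⁻¹ • c b)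
    have hmean : ∑ b, N⁻¹ • c b = N⁻¹ * ∑ b, c b := by
      simp only [smul_eq_mul]
      rw [← Finset.mul_sum]
    have hmeanpos : 0 < N⁻¹ * ∑ b, c b := by
      have : 0 < ∑ b, c b := Finset.sum_pos (fun b _ => hcpos b) ⟨0, Finset.mem_univ 0⟩
      positivity
    have hmono : Real.log (∑ b, N⁻¹ • c b) ≤ Real.log (2 * N⁻¹) := by
      rw [hmean]
      apply Real.log_le_log hmeanpos
      rw [mul_comm]
      exact mul_le_mul_of_nonneg_right hcol (by positivity)
    have hchain : ∑ b, N⁻¹ * Real.log (c b) ≤ Real.log (2 * N⁻¹) :=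
      le_trans (by simpa [smul_eq_mul] using jensen) hmono
    have hlog2 : (0 : ℝ) < Real.log 2 := Real.log_pos one_lt_two
    have e1 : (1 / N) * ∑ b, (- Real.logb 2 (c b))
        = - ((∑ b, N⁻¹ * Real.log (c b)) / Real.log 2) := by
      simp only [Real.logb]
      have h4 : ∑ b, Real.log (c b) / Real.log 2
          = (∑ b, Real.log (c b)) / Real.log 2 := (Finset.sum_div _ _ _).symm
      have h5 : ∑ b, N⁻¹ * Real.log (c b)
          = N⁻¹ * ∑ b, Real.log (c b) := (Finset.mul_sum _ _ _).symm
      rw [Finset.sum_neg_distrib, h4, h5]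
      field_simp
    have h3 : (∑ b, N⁻¹ * Real.log (c b)) / Real.log 2 ≤ Real.logb 2 (2 * N⁻¹) := by
      rw [Real.logb]
      gcongr
    have e2 : Real.logb 2 (2 * N⁻¹) = 1 - Real.logb 2 N := by
      rw [Real.logb_mul two_ne_zero (by positivity), Real.logb_inv,
        Real.logb_self_eq_one (by norm_num)]
      ring
    rw [e1]
    rw [e2] at h3
    linarith
  calc Real.logb 2 (2 ^ n + 1) - 1 = Real.logb 2 N - 1 := by rw [hN]
    _ ≤ (1 / N) * ∑ b, (- Real.logb 2 (c b)) := hstep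
    _ ≤ (1 / N) * ∑ b, shannonEntropy2 (fun x => ‖(inner ℂ (v b x) Ψ : ℂ)‖ ^ 2) := by
        apply mul_le_mul_of_nonneg_left hsum1 (by positivity)
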